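/- (Double bubble with density |x|.) Let M₁, M₂ > 0. Every configuration of 2 regions on ℝ with density |x| whose regions have weighted masses M₁ and M₂ has total weighted perimeter at least √(2M₁) + √(2M₂). Moreover, the configuration consisting of the intervals [−√(2M₂), 0] (region 2) and [0, √(2M₁)] (region 1) has weighted masses M₂ and M₁ and total weighted perimeter exactly √(2M₁) + √(2M₂). -/

import Mathlib

open MeasureTheory Finset

/-- A configuration of `n` regions made of `k` nondegenerate closed intervals
with pairwise disjoint interiors, each interval labeled by one of the regions. -/
structure Config (n k : ℕ) where
  lo : Fin k → ℝ
  hi : Fin k → ℝ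
  lab : Fin k → Fin n
  nondeg : ∀ j, lo j < hi j
  disj : ∀ i j, i ≠ j → Set.Ioo (lo i) (hi i) ∩ Set.Ioo (lo j) (hi j) = ∅

namespace Config

variable {n k : ℕ}

/-- Weighted mass of region `i` with respect to the density `|x|`. -/
noncomputable def mass (C : Config n k) (i : Fin n) : ℝ :=
  ∑ j ∈ univ.filter (fun j => C.lab j = i), ∫ x in C.lo j..C.hi j, |x|

/-- The (finite) set of all endpoints of intervals of the configuration. -/
noncomputable def endpointSet (C : Config n k) : Finset ℝ :=
  image C.lo univ ∪ image C.hi univ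

/-- Total weighted perimeter with respect to the density `|x|`. -/
noncomputable def perim (C : Config n k) : ℝ :=
  ∑ x ∈ C.endpointSet, |x|

/-- A configuration is condensed if the union of its intervals is a closed interval
containing `0` and each region has at most one interval contained in `(-∞,0]`
and at most one interval contained in `[0,∞)`. -/
def Condensed (C : Config n k) : Prop :=
  (∃ a b : ℝ, a ≤ 0 ∧ 0 ≤ b ∧ (⋃ j, Set.Icc (C.lo j) (C.hi j)) = Set.Icc a b) ∧
  ∀ i : Fin n,
    (univ.filter (fun j => C.lab j = i ∧ C.hi j ≤ 0)).card ≤ 1 ∧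
    (univ.filter (fun j => C.lab j = i ∧ 0 ≤ C.lo j)).card ≤ 1

/-- A configuration is isoperimetric if its total weighted perimeter is least among all
configurations of `n` regions with the same list of weighted masses. -/
def Isoperimetric (C : Config n k) : Prop :=
  ∀ (k' : ℕ) (C' : Config n k'), (∀ i, C'.mass i = C.mass i) → C.perim ≤ C'.perim

end Config


open intervalIntegral Filter in
private theorem integral_abs_id (a b : ℝ) : ∫ x in a..b, |x| = (b*|b| - a*|a|)/2 := by
  have hd : ∀ x : ℝ, HasDerivAt (fun y => y*|y|/2) |x| x := by
    intro x
    rcases lt_trichotomy x 0 with hx | hx | hx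
    · rw [abs_of_neg hx]
      have : HasDerivAt (fun y : ℝ => -(y^2)/2) (-x) x := by
        have := ((hasDerivAt_pow 2 x).neg.div_const 2)
        exact this.congr_deriv (by ring)
      refine this.congr_of_eventuallyEq ?_
      filter_upwards [eventually_lt_nhds hx] with y hy
      rw [abs_of_neg hy]; ring
    · subst hx
      rw [abs_zero, hasDerivAt_iff_tendsto_slope]
      have h1 : Tendsto (fun y : ℝ => |y|/2) (nhdsWithin 0 {(0:ℝ)}ᶜ) (nhds 0) := by
        have h : Tendsto (fun y : ℝ => |y|/2) (nhds 0) (nhds 0) := by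
          have h := (continuous_abs.div_const 2).continuousAt (x := (0:ℝ))
          unfold ContinuousAt at h
          simpa using h
        exact h.mono_left nhdsWithin_le_nhds
      refine h1.congr' ?_
      filter_upwards [self_mem_nhdsWithin] with y hy
      simp only [Set.mem_compl_iff, Set.mem_singleton_iff] at hy
      rw [slope_def_field]
      field_simp
      ring
    · rw [abs_of_pos hx]
      have : HasDerivAt (fun y : ℝ => (y^2)/2) x x := by
        have := ((hasDerivAt_pow 2 x).div_const 2)
        exact this.congr_deriv (by ring)
      refine this.congr_of_eventuallyEq ?_
      filter_upwards [eventually_gt_nhds hx] with y hy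
      rw [abs_of_pos hy]; ring
  rw [integral_eq_sub_of_hasDerivAt (fun x _ => hd x)
    (continuous_abs.intervalIntegrable a b)]
  ring

noncomputable def qq (x : ℝ) : ℝ := (max x 0)^2

lemma qq_nonneg (x : ℝ) : 0 ≤ qq x := sq_nonneg _

lemma qq_mono : Monotone qq := fun a b h => by
  unfold qq
  exact pow_le_pow_left₀ (le_max_right a 0) (max_le_max h le_rfl) 2

lemma qq_of_nonpos {x : ℝ} (h : x ≤ 0) : qq x = 0 := by
  unfold qq; rw [max_eq_right h]; norm_num

lemma mul_abs_eq (x : ℝ) : x*|x| = qq x - qq (-x) := by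
  rcases le_or_gt 0 x with h | h
  · rw [abs_of_nonneg h]; unfold qq
    rw [max_eq_left h, max_eq_right (neg_nonpos.mpr h)]; ring
  · rw [abs_of_neg h]; unfold qq
    rw [max_eq_right h.le, max_eq_left (neg_nonneg.mpr h.le)]; ring

lemma abs_eq_max_add (x : ℝ) : |x| = max x 0 + max (-x) 0 := by
  rcases le_or_gt 0 x with h | h
  · rw [abs_of_nonneg h, max_eq_left h, max_eq_right (neg_nonpos.mpr h)]; ring
  · rw [abs_of_neg h, max_eq_right h.le, max_eq_left (neg_nonneg.mpr h.le)]; ring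

lemma sum_qq_le {k : ℕ} (lo hi : Fin k → ℝ) (nondeg : ∀ j, lo j < hi j)
    (ord : ∀ i j : Fin k, i ≠ j → hi i ≤ lo j ∨ hi j ≤ lo i)
    (S : Finset (Fin k)) : ∀ (B : ℝ), (∀ j ∈ S, hi j ≤ B) →
    ∑ j ∈ S, (qq (hi j) - qq (lo j)) ≤ qq B := by
  induction S using Finset.strongInduction with
  | _ S ih =>
    intro B hB
    rcases S.eq_empty_or_nonempty with rfl | hS
    · simpa using qq_nonneg B
    · obtain ⟨j0, hj0S, hj0⟩ := S.exists_max_image hi hS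
      rw [← Finset.sum_erase_add S _ hj0S]
      have h1 : ∑ j ∈ S.erase j0, (qq (hi j) - qq (lo j)) ≤ qq (lo j0) := by
        refine ih _ (Finset.erase_ssubset hj0S) _ ?_
        intro j hj
        have hjS := Finset.mem_of_mem_erase hj
        have hne : j ≠ j0 := Finset.ne_of_mem_erase hj
        rcases ord j j0 hne with h | h
        · exact h
        · exact absurd ((nondeg j).trans_le ((hj0 j hjS).trans h)) (lt_irrefl _)
      have h2 := qq_mono (hB j0 hj0S)
      linarith

lemma hi_ne {k : ℕ} (lo hi : Fin k → ℝ) (nondeg : ∀ j, lo j < hi j)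
    (ord : ∀ i j : Fin k, i ≠ j → hi i ≤ lo j ∨ hi j ≤ lo i)
    {i j : Fin k} (h : i ≠ j) : hi i ≠ hi j := by
  rcases ord i j h with h' | h'
  · exact ne_of_lt (h'.trans_lt (nondeg j))
  · exact (ne_of_lt (h'.trans_lt (nondeg i))).symm

lemma one_sided {k : ℕ} (lo hi : Fin k → ℝ) (lab : Fin k → Fin 2)
    (nondeg : ∀ j, lo j < hi j)
    (ord : ∀ i j : Fin k, i ≠ j → hi i ≤ lo j ∨ hi j ≤ lo i)
    (E : Finset ℝ) (hE : ∀ j, hi j ∈ E) :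
    Real.sqrt (∑ j ∈ univ.filter (fun j => lab j = 0), (qq (hi j) - qq (lo j)))
      + Real.sqrt (∑ j ∈ univ.filter (fun j => lab j = 1), (qq (hi j) - qq (lo j)))
      ≤ ∑ x ∈ E, max x 0 := by
  set P : Fin 2 → ℝ :=
    fun i => ∑ j ∈ univ.filter (fun j => lab j = i), (qq (hi j) - qq (lo j)) with hP
  have key : ∀ i : Fin 2, (∃ j, lab j = i ∧ 0 < hi j) →
      ∃ j0, lab j0 = i ∧ 0 < hi j0 ∧ Real.sqrt (P i) ≤ hi j0 := by
    intro i ⟨jw, hjw, hjwpos⟩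
    have hSne : (univ.filter (fun j => lab j = i)).Nonempty :=
      ⟨jw, by simp [hjw]⟩
    obtain ⟨j0, hj0S, hj0⟩ := Finset.exists_max_image _ hi hSne
    have hj0lab : lab j0 = i := by simpa using hj0S
    have hjw' : hi jw ≤ hi j0 := hj0 jw (by simp [hjw])
    have hj0pos : 0 < hi j0 := lt_of_lt_of_le hjwpos hjw'
    refine ⟨j0, hj0lab, hj0pos, ?_⟩
    have hb : P i ≤ qq (hi j0) :=
      sum_qq_le lo hi nondeg ord _ _ (fun j hj => hj0 j hj)
    calc Real.sqrt (P i) ≤ Real.sqrt (qq (hi j0)) := Real.sqrt_le_sqrt hb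
      _ = hi j0 := by
          unfold qq
          rw [max_eq_left hj0pos.le, Real.sqrt_sq hj0pos.le]
  have zero : ∀ i : Fin 2, ¬(∃ j, lab j = i ∧ 0 < hi j) → Real.sqrt (P i) = 0 := by
    intro i h
    push_neg at h
    have : P i ≤ 0 := by
      apply Finset.sum_nonpos
      intro j hj
      have hlab : lab j = i := by simpa using hj
      have : hi j ≤ 0 := h j hlab
      rw [qq_of_nonpos this]
      simpa using qq_nonneg (lo j)
    exact Real.sqrt_eq_zero'.mpr this
  have hEnn : ∀ x ∈ E, (0:ℝ) ≤ max x 0 := fun x _ => le_max_right x 0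
  by_cases h0 : ∃ j, lab j = 0 ∧ 0 < hi j
  · by_cases h1 : ∃ j, lab j = 1 ∧ 0 < hi j
    · obtain ⟨j0, hl0, hp0, hs0⟩ := key 0 h0
      obtain ⟨j1, hl1, hp1, hs1⟩ := key 1 h1
      have hne : hi j0 ≠ hi j1 := by
        apply hi_ne lo hi nondeg ord
        intro h; rw [h, hl1] at hl0; exact absurd hl0 (by decide)
      have hsub : ({hi j0, hi j1} : Finset ℝ) ⊆ E := by
        intro x hx
        rcases Finset.mem_insert.mp hx with rfl | hx
        · exact hE j0
        · rw [Finset.mem_singleton.mp hx]; exact hE j1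
      have := Finset.sum_le_sum_of_subset_of_nonneg hsub (fun x hx _ => hEnn x hx)
      rw [Finset.sum_pair hne] at this
      have e0 : max (hi j0) 0 = hi j0 := max_eq_left hp0.le
      have e1 : max (hi j1) 0 = hi j1 := max_eq_left hp1.le
      rw [e0, e1] at this
      linarith
    · obtain ⟨j0, hl0, hp0, hs0⟩ := key 0 h0
      have hz := zero 1 h1
      have := Finset.single_le_sum hEnn (hE j0)
      rw [max_eq_left hp0.le] at this
      linarith
  · by_cases h1 : ∃ j, lab j = 1 ∧ 0 < hi j
    · obtain ⟨j1, hl1, hp1, hs1⟩ := key 1 h1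
      have hz := zero 0 h0
      have := Finset.single_le_sum hEnn (hE j1)
      rw [max_eq_left hp1.le] at this
      linarith
    · have hz0 := zero 0 h0
      have hz1 := zero 1 h1
      have := Finset.sum_nonneg hEnn
      linarith

lemma Config.ord {k : ℕ} (C : Config 2 k) :
    ∀ i j : Fin k, i ≠ j → C.hi i ≤ C.lo j ∨ C.hi j ≤ C.lo i := by
  intro i j hij
  by_contra h
  push_neg at h
  obtain ⟨h1, h2⟩ := h
  set x := (max (C.lo i) (C.lo j) + min (C.hi i) (C.hi j))/2 with hx
  have hm : max (C.lo i) (C.lo j) < min (C.hi i) (C.hi j) := by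
    rw [max_lt_iff, lt_min_iff, lt_min_iff]
    exact ⟨⟨C.nondeg i, h2⟩, ⟨h1, C.nondeg j⟩⟩
  have hmem : x ∈ Set.Ioo (C.lo i) (C.hi i) ∩ Set.Ioo (C.lo j) (C.hi j) := by
    constructor <;> constructor
    · calc C.lo i ≤ max (C.lo i) (C.lo j) := le_max_left _ _
        _ < x := by rw [hx]; linarith
    · calc x < min (C.hi i) (C.hi j) := by rw [hx]; linarith
        _ ≤ C.hi i := min_le_left _ _
    · calc C.lo j ≤ max (C.lo i) (C.lo j) := le_max_right _ _
        _ < x := by rw [hx]; linarith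
    · calc x < min (C.hi i) (C.hi j) := by rw [hx]; linarith
        _ ≤ C.hi j := min_le_right _ _
  rw [C.disj i j hij] at hmem
  exact hmem

lemma main_bound {k : ℕ} (C : Config 2 k) :
    Real.sqrt (2 * C.mass 0) + Real.sqrt (2 * C.mass 1) ≤ C.perim := by
  have ord := C.ord
  set P : Fin 2 → ℝ :=
    fun i => ∑ j ∈ univ.filter (fun j => C.lab j = i), (qq (C.hi j) - qq (C.lo j)) with hP
  set N : Fin 2 → ℝ :=
    fun i => ∑ j ∈ univ.filter (fun j => C.lab j = i),
      (qq (-C.lo j) - qq (-C.hi j)) with hN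
  have hPN : ∀ i, 2 * C.mass i = P i + N i := by
    intro i
    rw [Config.mass, Finset.mul_sum, hP, hN]
    simp only
    rw [← Finset.sum_add_distrib]
    refine Finset.sum_congr rfl fun j _ => ?_
    rw [integral_abs_id, mul_abs_eq (C.hi j), mul_abs_eq (C.lo j)]
    ring
  have hPnn : ∀ i, 0 ≤ P i := fun i =>
    Finset.sum_nonneg fun j _ => sub_nonneg.mpr (qq_mono (C.nondeg j).le)
  have hNnn : ∀ i, 0 ≤ N i := fun i =>
    Finset.sum_nonneg fun j _ => sub_nonneg.mpr (qq_mono (neg_le_neg (C.nondeg j).le))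
  have split : ∀ i, Real.sqrt (2 * C.mass i) ≤ Real.sqrt (P i) + Real.sqrt (N i) := by
    intro i
    rw [hPN i, ← Real.sqrt_sq (add_nonneg (Real.sqrt_nonneg (P i)) (Real.sqrt_nonneg (N i)))]
    apply Real.sqrt_le_sqrt
    nlinarith [Real.sq_sqrt (hPnn i), Real.sq_sqrt (hNnn i),
      Real.sqrt_nonneg (P i), Real.sqrt_nonneg (N i)]
  have hEhi : ∀ j, C.hi j ∈ C.endpointSet := fun j =>
    Finset.mem_union_right _ (Finset.mem_image_of_mem _ (Finset.mem_univ j))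
  have hElo : ∀ j, C.lo j ∈ C.endpointSet := fun j =>
    Finset.mem_union_left _ (Finset.mem_image_of_mem _ (Finset.mem_univ j))
  have hpos := one_sided C.lo C.hi C.lab C.nondeg ord C.endpointSet hEhi
  have hneg := one_sided (fun j => -C.hi j) (fun j => -C.lo j) C.lab
    (fun j => neg_lt_neg (C.nondeg j))
    (fun i j hij => (ord i j hij).symm.imp neg_le_neg neg_le_neg)
    (C.endpointSet.image (fun x => -x))
    (fun j => Finset.mem_image_of_mem _ (hElo j))
  rw [Finset.sum_image (fun a _ b _ h => neg_injective h)] at hneg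
  have hperim : C.perim = (∑ x ∈ C.endpointSet, max x 0) + ∑ x ∈ C.endpointSet, max (-x) 0 := by
    rw [Config.perim, ← Finset.sum_add_distrib]
    exact Finset.sum_congr rfl fun x _ => abs_eq_max_add x
  have s0 := split 0
  have s1 := split 1
  rw [hperim]
  have hpos' : Real.sqrt (P 0) + Real.sqrt (P 1) ≤ ∑ x ∈ C.endpointSet, max x 0 := hpos
  have hneg' : Real.sqrt (N 0) + Real.sqrt (N 1) ≤ ∑ x ∈ C.endpointSet, max (-x) 0 := hneg
  linarith

/-- Double bubble with density `|x|`: every configuration of two regions of weighted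
masses `M₁, M₂ > 0` has total weighted perimeter at least `√(2M₁) + √(2M₂)`, and the
configuration of the intervals `[-√(2M₂), 0]` (region `1`) and `[0, √(2M₁)]`
(region `0`) achieves this with the correct masses. -/
theorem double_bubble (M₁ M₂ : ℝ) (h₁ : 0 < M₁) (h₂ : 0 < M₂) :
    (∀ (k : ℕ) (C : Config 2 k),
      (∃ σ : Equiv.Perm (Fin 2), ∀ i, C.mass (σ i) = ![M₁, M₂] i) →
      Real.sqrt (2 * M₁) + Real.sqrt (2 * M₂) ≤ C.perim) ∧
    (∃ C : Config 2 2,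
      C.lo 1 = -Real.sqrt (2 * M₂) ∧ C.hi 1 = 0 ∧ C.lab 1 = 1 ∧
      C.lo 0 = 0 ∧ C.hi 0 = Real.sqrt (2 * M₁) ∧ C.lab 0 = 0 ∧
      C.mass 0 = M₁ ∧ C.mass 1 = M₂ ∧
      C.perim = Real.sqrt (2 * M₁) + Real.sqrt (2 * M₂)) := by
  constructor
  · intro k C hC
    obtain ⟨σ, hσ⟩ := hC
    have h0 := hσ 0
    have h1 := hσ 1
    simp only [Matrix.cons_val_zero, Matrix.cons_val_one, Matrix.head_cons] at h0 h1
    have hmb := main_bound C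
    have htwo : ∀ i : Fin 2, i = 0 ∨ i = 1 := by decide
    rcases htwo (σ 0) with e0 | e0
    · have e1 : σ 1 = 1 := by
        rcases htwo (σ 1) with e1 | e1
        · exact absurd (σ.injective (e1.trans e0.symm)) (by decide)
        · exact e1
      rw [e0] at h0; rw [e1] at h1
      rw [← h0, ← h1]
      exact hmb
    · have e1 : σ 1 = 0 := by
        rcases htwo (σ 1) with e1 | e1
        · exact e1
        · exact absurd (σ.injective (e1.trans e0.symm)) (by decide)
      rw [e0] at h0; rw [e1] at h1
      rw [← h0, ← h1]
      linarith
  · set s₁ := Real.sqrt (2 * M₁) with hs₁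
    set s₂ := Real.sqrt (2 * M₂) with hs₂
    have hs₁pos : 0 < s₁ := Real.sqrt_pos.mpr (by linarith)
    have hs₂pos : 0 < s₂ := Real.sqrt_pos.mpr (by linarith)
    have nd : ∀ j : Fin 2, (![0, -s₂] : Fin 2 → ℝ) j < (![s₁, 0] : Fin 2 → ℝ) j := by
      intro j
      fin_cases j
      · simpa using hs₁pos
      · simpa using hs₂pos
    have dj : ∀ i j : Fin 2, i ≠ j →
        Set.Ioo ((![0, -s₂] : Fin 2 → ℝ) i) ((![s₁, 0] : Fin 2 → ℝ) i)
          ∩ Set.Ioo ((![0, -s₂] : Fin 2 → ℝ) j) ((![s₁, 0] : Fin 2 → ℝ) j) = ∅ := by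
      intro i j hij
      have key : Set.Ioo (0:ℝ) s₁ ∩ Set.Ioo (-s₂) 0 = ∅ := by
        apply Set.eq_empty_iff_forall_notMem.mpr
        rintro x ⟨⟨hx1, _⟩, ⟨_, hx2⟩⟩
        linarith
      have key' : Set.Ioo (-s₂) (0:ℝ) ∩ Set.Ioo 0 s₁ = ∅ := by
        rw [Set.inter_comm]; exact key
      fin_cases i <;> fin_cases j <;> simp_all
    refine ⟨⟨![0, -s₂], ![s₁, 0], ![0, 1], nd, dj⟩, ?_, ?_, ?_, ?_, ?_, ?_, ?_, ?_, ?_⟩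
    · simp
    · simp
    · simp
    · simp
    · simp
    · simp
    · show Config.mass _ 0 = M₁
      rw [Config.mass]
      rw [Finset.sum_filter, Fin.sum_univ_two]
      norm_num
      rw [integral_abs_id]
      rw [abs_of_nonneg hs₁pos.le]
      have : s₁ * s₁ = 2 * M₁ := Real.mul_self_sqrt (by linarith)
      linarith
    · show Config.mass _ 1 = M₂
      rw [Config.mass]
      rw [Finset.sum_filter, Fin.sum_univ_two]
      norm_num
      rw [integral_abs_id]
      rw [abs_neg, abs_of_nonneg hs₂pos.le]
      have : s₂ * s₂ = 2 * M₂ := Real.mul_self_sqrt (by linarith)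
      linarith
    · show Config.perim _ = s₁ + s₂
      have hE : Config.endpointSet (⟨![0, -s₂], ![s₁, 0], ![0, 1], nd, dj⟩ : Config 2 2)
          = {-s₂, 0, s₁} := by
        rw [Config.endpointSet]
        ext x
        simp only [Finset.mem_union, Finset.mem_image, Finset.mem_univ, true_and,
          Finset.mem_insert, Finset.mem_singleton, Fin.exists_fin_two]
        simp only [Matrix.cons_val_zero, Matrix.cons_val_one, Matrix.head_cons]
        constructor
        · rintro ((h | h) | (h | h)) <;> simp [← h]
        · rintro (h | h | h) <;> simp [h] <;> tauto
      rw [Config.perim, hE]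
      have h1 : (-s₂ : ℝ) ∉ ({0, s₁} : Finset ℝ) := by
        simp only [Finset.mem_insert, Finset.mem_singleton]
        push_neg
        constructor <;> intro h <;> nlinarith
      have h2 : (0:ℝ) ∉ ({s₁} : Finset ℝ) := by
        simp only [Finset.mem_singleton]
        intro h; exact hs₁pos.ne h
      rw [Finset.sum_insert h1, Finset.sum_insert h2, Finset.sum_singleton,
        abs_neg, abs_of_nonneg hs₂pos.le, abs_zero, abs_of_nonneg hs₁pos.le]
      ring
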